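/- With the notation of the context: f ∘ g = id_{C'}, and g ∘ f is chain homotopic to id_C via the homotopy h, namely id_C − g∘f = d∘h + h∘d. In particular the complexes (C, d) and (C', d') are chain homotopy equivalent. -/

import Mathlib

open Finsupp

/-- The complement of the two cancelled basis indices. -/
def cancelSet {I : Type*} (k l : I) : Set I := {i | i ≠ k ∧ i ≠ l}

variable {R : Type*} [CommRing R] {C : Type*} [AddCommGroup C] [Module R C]
  {I : Type*}

/-- The inclusion `ι : C' → C` of the free module on the remaining basis vectors. -/
noncomputable def cancelIota (b : Module.Basis I R C) (k l : I) :
    ((cancelSet k l) →₀ R) →ₗ[R] C :=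
  Finsupp.linearCombination R (fun i : cancelSet k l => b i.1)

/-- The projection `π : C → C'` killing `x_k` and `x_l` and fixing the other
basis vectors. -/
noncomputable def cancelPi (b : Module.Basis I R C) (k l : I) :
    C →ₗ[R] ((cancelSet k l) →₀ R) :=
  (Finsupp.lsubtypeDomain (cancelSet k l)) ∘ₗ (b.repr : C →ₗ[R] (I →₀ R))

/-- The map `h : C → C` with `h(x_l) = x_k` and `h(x_i) = 0` for `i ≠ l`. -/
noncomputable def cancelH (b : Module.Basis I R C) (k l : I) : C →ₗ[R] C :=
  (LinearMap.toSpanSingleton R C (b k)) ∘ₗ (b.coord l)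

/-- The reduced differential `d' = π ∘ (d - d∘h∘d) ∘ ι`. -/
noncomputable def cancelD (b : Module.Basis I R C) (k l : I) (d : C →ₗ[R] C) :
    ((cancelSet k l) →₀ R) →ₗ[R] ((cancelSet k l) →₀ R) :=
  (cancelPi b k l) ∘ₗ (d - d ∘ₗ (cancelH b k l) ∘ₗ d) ∘ₗ (cancelIota b k l)

/-- The chain map `f = π ∘ (id - d∘h) : C → C'`. -/
noncomputable def cancelF (b : Module.Basis I R C) (k l : I) (d : C →ₗ[R] C) :
    C →ₗ[R] ((cancelSet k l) →₀ R) :=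
  (cancelPi b k l) ∘ₗ (LinearMap.id - d ∘ₗ (cancelH b k l))

/-- The chain map `g = (id - h∘d) ∘ ι : C' → C`. -/
noncomputable def cancelG (b : Module.Basis I R C) (k l : I) (d : C →ₗ[R] C) :
    ((cancelSet k l) →₀ R) →ₗ[R] C :=
  (LinearMap.id - (cancelH b k l) ∘ₗ d) ∘ₗ (cancelIota b k l)

lemma pi_apply (b : Module.Basis I R C) (k l : I) (x : C) (a : cancelSet k l) :
    cancelPi b k l x a = b.repr x a := rfl

lemma iota_single (b : Module.Basis I R C) (k l : I) (a : cancelSet k l) :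
    cancelIota b k l (single a (1:R)) = b a := by simp [cancelIota]

lemma h_apply (b : Module.Basis I R C) (k l : I) (x : C) :
    cancelH b k l x = b.repr x l • b k := rfl

lemma pi_basis_mem (b : Module.Basis I R C) (k l : I) {i : I} (hi : i ∈ cancelSet k l) :
    cancelPi b k l (b i) = single ⟨i, hi⟩ (1:R) := by
  classical
  ext a
  rw [pi_apply, b.repr_self, single_apply, single_apply]
  simp only [Subtype.ext_iff]

lemma pi_basis_k (b : Module.Basis I R C) (k l : I) :
    cancelPi b k l (b k) = 0 := by
  classical
  ext a
  rw [pi_apply, b.repr_self, single_apply, if_neg (Ne.symm a.2.1)]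
  rfl

lemma pi_basis_l (b : Module.Basis I R C) (k l : I) :
    cancelPi b k l (b l) = 0 := by
  classical
  ext a
  rw [pi_apply, b.repr_self, single_apply, if_neg (Ne.symm a.2.2)]
  rfl

lemma iota_pi (b : Module.Basis I R C) (k l : I) (hkl : k ≠ l) (y : C) :
    cancelIota b k l (cancelPi b k l y)
      = y - b.repr y k • b k - b.repr y l • b l := by
  classical
  have : (cancelIota b k l) ∘ₗ (cancelPi b k l)
      = LinearMap.id - (LinearMap.toSpanSingleton R C (b k)) ∘ₗ (b.coord k)
        - (LinearMap.toSpanSingleton R C (b l)) ∘ₗ (b.coord l) := by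
    apply b.ext
    intro i
    by_cases hik : i = k
    · subst hik
      simp [pi_basis_k, Module.Basis.coord_apply, b.repr_self, single_apply, hkl, Ne.symm hkl]
    · by_cases hil : i = l
      · subst hil
        simp [pi_basis_l, Module.Basis.coord_apply, b.repr_self, single_apply, hkl, Ne.symm hkl, hik]
      · rw [LinearMap.comp_apply, pi_basis_mem b k l ⟨hik, hil⟩, iota_single]
        simp [Module.Basis.coord_apply, b.repr_self, single_apply, hik, hil]
  have := LinearMap.congr_fun this y
  simpa [Module.Basis.coord_apply] using this

lemma h_basis_ne (b : Module.Basis I R C) (k l : I) {i : I} (hi : i ≠ l) :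
    cancelH b k l (b i) = 0 := by
  classical
  rw [h_apply, b.repr_self, single_apply, if_neg hi, zero_smul]

lemma h_basis_l (b : Module.Basis I R C) (k l : I) :
    cancelH b k l (b l) = b k := by
  classical
  rw [h_apply, b.repr_self, single_apply, if_pos rfl, one_smul]

lemma g_apply (b : Module.Basis I R C) (k l : I) (d : C →ₗ[R] C) (x : (cancelSet k l) →₀ R) :
    cancelG b k l d x
      = cancelIota b k l x - cancelH b k l (d (cancelIota b k l x)) := by
  simp [cancelG]

lemma f_apply (b : Module.Basis I R C) (k l : I) (d : C →ₗ[R] C) (x : C) :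
    cancelF b k l d x
      = cancelPi b k l x - cancelPi b k l (d (cancelH b k l x)) := by
  simp [cancelF]

/-- cancellation lemma, homotopy equivalence part:
`f ∘ g = id` on `C'`, and `id_C - g ∘ f = d ∘ h + h ∘ d`, so `(C, d)` and
`(C', d')` are chain homotopy equivalent via the homotopy `h`. -/
theorem cancellation_homotopy_equivalence (b : Module.Basis I R C) (d : C →ₗ[R] C)
    (hd : d ∘ₗ d = 0) (k l : I) (hkl : k ≠ l) (hdkl : b.repr (d (b k)) l = 1) :
    (cancelF b k l d) ∘ₗ (cancelG b k l d) = LinearMap.id ∧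
    LinearMap.id - (cancelG b k l d) ∘ₗ (cancelF b k l d) =
      d ∘ₗ (cancelH b k l) + (cancelH b k l) ∘ₗ d := by
  classical
  have hdd : ∀ x : C, d (d x) = 0 := fun x => LinearMap.congr_fun hd x
  constructor
  · apply Finsupp.lhom_ext
    intro a r
    have hone : (cancelF b k l d ∘ₗ cancelG b k l d) (single a (1:R)) = single a 1 := by
      rw [LinearMap.comp_apply, g_apply, iota_single,
        h_apply b k l (d (b (a:I)))]
      set c : R := b.repr (d (b (a:I))) l with hc
      have hH : cancelH b k l (b (a:I) - c • b k) = 0 := by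
        rw [h_apply]
        simp [b.repr_self, single_apply, hkl, a.2.2]
      rw [f_apply, hH, map_zero, map_zero, sub_zero, map_sub, map_smul,
        pi_basis_k, pi_basis_mem b k l a.2, smul_zero, sub_zero]
    rw [show (single a r : cancelSet k l →₀ R) = r • single a (1:R) by simp,
      map_smul, hone, LinearMap.id_apply]
  · apply b.ext
    intro i
    simp only [LinearMap.sub_apply, LinearMap.add_apply, LinearMap.comp_apply,
      LinearMap.id_apply]
    by_cases hik : i = k
    · subst hik
      rw [f_apply, h_basis_ne b i l hkl, map_zero, map_zero, sub_zero, pi_basis_k,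
        map_zero, sub_zero, zero_add, h_apply, hdkl, one_smul]
    · by_cases hil : i = l
      · subst hil
        rw [f_apply, h_basis_l, pi_basis_l, zero_sub, map_neg, g_apply,
          iota_pi b k i hkl, hdkl, one_smul]
        simp only [map_sub, map_smul, map_zero, hdd (b k)]
        rw [h_apply b k i (d (b k)), hdkl, one_smul]
        abel
      · have hiS : i ∈ cancelSet k l := ⟨hik, hil⟩
        rw [f_apply, h_basis_ne b k l hil, map_zero, map_zero, sub_zero,
          pi_basis_mem b k l hiS, g_apply, iota_single]
        show b i - (b i - cancelH b k l (d (b i))) = 0 + cancelH b k l (d (b i))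
        rw [sub_sub_cancel, zero_add]
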